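/- For m ≥ 3, the canonical form of the neural ideal of the chain code C_m = {∅, {1}, {1,2}, ..., {1,...,m-1}} on m-1 neurons is CF(C_m) = {x_i(1 - x_j) : i, j ∈ [m-1], i > j}. -/

import Mathlib

open MvPolynomial

/-- `ρ_v = ∏_{i ∈ v} x_i ∏_{j ∈ [n] \ v} (1 - x_j)` in `F₂[x_1,…,x_n]`
(variables indexed by `{1,…,n} ⊆ ℕ`). -/
noncomputable def rho (n : ℕ) (v : Finset ℕ) : MvPolynomial ℕ (ZMod 2) :=
  ∏ i ∈ Finset.Icc 1 n, if i ∈ v then X i else (1 - X i)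

/-- The neural ideal `J_C = ⟨ρ_v : v ⊆ [n], v ∉ C⟩` of a code `C` on `n` neurons. -/
noncomputable def neuralIdeal (n : ℕ) (C : Set (Finset ℕ)) : Ideal (MvPolynomial ℕ (ZMod 2)) :=
  Ideal.span {p | ∃ v : Finset ℕ, v ⊆ Finset.Icc 1 n ∧ v ∉ C ∧ p = rho n v}

/-- A pseudo-monomial: `∏_{i ∈ σ} x_i ∏_{j ∈ τ} (1 - x_j)` with `σ ∩ τ = ∅`. -/
def IsPseudoMonomial (f : MvPolynomial ℕ (ZMod 2)) : Prop :=
  ∃ σ τ : Finset ℕ, Disjoint σ τ ∧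
    f = (∏ i ∈ σ, X i) * ∏ j ∈ τ, (1 - X j)

/-- `f` is a minimal pseudo-monomial of the ideal `J`: a pseudo-monomial in `J` such
that no pseudo-monomial `g ∈ J` of strictly smaller degree satisfies `f = h * g`. -/
def IsMinimalPseudoMonomial (J : Ideal (MvPolynomial ℕ (ZMod 2)))
    (f : MvPolynomial ℕ (ZMod 2)) : Prop :=
  IsPseudoMonomial f ∧ f ∈ J ∧
    ¬ ∃ g, IsPseudoMonomial g ∧ g ∈ J ∧ g.totalDegree < f.totalDegree ∧
      ∃ h, f = h * g

/-- The canonical form `CF(C)`: the set of all minimal pseudo-monomials of `J_C`. -/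
noncomputable def CF (n : ℕ) (C : Set (Finset ℕ)) : Set (MvPolynomial ℕ (ZMod 2)) :=
  {f | IsMinimalPseudoMonomial (neuralIdeal n C) f}

/-- The chain code `C_m = {∅, {1}, {1,2}, …, {1,…,m-1}}`. -/
def chainCode (m : ℕ) : Set (Finset ℕ) :=
  {s | ∃ i < m, s = Finset.Icc 1 i}

/-! ### Auxiliary lemmas -/

namespace CFChainAux

/-- Products of `X`'s are monomials. -/
lemma prod_X_eq_monomial (S : Finset ℕ) :
    (∏ t ∈ S, X t : MvPolynomial ℕ (ZMod 2)) =
      monomial (∑ t ∈ S, Finsupp.single t 1) 1 := by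
  induction S using Finset.induction_on with
  | empty => simp
  | insert _ _ ha ih =>
      rw [Finset.prod_insert ha, Finset.sum_insert ha, ih]
      rw [show (X _ : MvPolynomial ℕ (ZMod 2)) = monomial (Finsupp.single _ 1) 1 from rfl,
        monomial_mul, one_mul]

lemma sum_single_sum (S : Finset ℕ) :
    ((∑ t ∈ S, Finsupp.single t 1 : ℕ →₀ ℕ).sum fun _ e => e) = S.card := by
  induction S using Finset.induction_on with
  | empty => simp
  | insert _ _ ha ih =>
      rw [Finset.sum_insert ha, Finsupp.sum_add_index' (fun _ => rfl) (fun _ _ _ => rfl),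
        Finsupp.sum_single_index rfl, ih, Finset.card_insert_of_notMem ha]
      omega

lemma td_prod_X (S : Finset ℕ) :
    (∏ t ∈ S, X t : MvPolynomial ℕ (ZMod 2)).totalDegree = S.card := by
  rw [prod_X_eq_monomial, totalDegree_monomial _ one_ne_zero, sum_single_sum]

/-- `totalDegree` does not increase under substitutions by degree-≤1 polynomials. -/
lemma td_aeval_le (g : ℕ → MvPolynomial ℕ (ZMod 2)) (hg : ∀ i, (g i).totalDegree ≤ 1)
    (p : MvPolynomial ℕ (ZMod 2)) : ((aeval g) p).totalDegree ≤ p.totalDegree := by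
  conv_lhs => rw [p.as_sum]
  rw [map_sum]
  apply totalDegree_finsetSum_le
  intro v hv
  rw [aeval_monomial]
  refine le_trans (totalDegree_mul _ _) ?_
  have h1 : (algebraMap (ZMod 2) (MvPolynomial ℕ (ZMod 2)) (coeff v p)).totalDegree = 0 := by
    rw [MvPolynomial.algebraMap_eq, totalDegree_C]
  have h2 : (v.prod fun i k => g i ^ k).totalDegree ≤ v.sum fun _ e => e := by
    refine le_trans (totalDegree_finset_prod _ _) ?_
    refine le_trans (Finset.sum_le_sum fun i _ =>
      le_trans (totalDegree_pow _ _) (Nat.mul_le_mul_left _ (hg i))) ?_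
    simp only [mul_one]
    exact le_of_eq rfl
  calc (algebraMap (ZMod 2) (MvPolynomial ℕ (ZMod 2)) (coeff v p)).totalDegree +
        (v.prod fun i k => g i ^ k).totalDegree
      ≤ 0 + (v.sum fun _ e => e) := add_le_add (le_of_eq h1) h2
    _ ≤ p.totalDegree := by rw [zero_add]; exact le_totalDegree hv

/-- The total degree of a pseudo-monomial. -/
lemma td_pm (σ τ : Finset ℕ) (hd : Disjoint σ τ) :
    ((∏ i ∈ σ, X i) * ∏ j ∈ τ, (1 - X j) : MvPolynomial ℕ (ZMod 2)).totalDegree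
      = σ.card + τ.card := by
  apply le_antisymm
  · refine le_trans (totalDegree_mul _ _) (add_le_add ?_ ?_)
    · refine le_trans (totalDegree_finset_prod _ _) ?_
      simp [totalDegree_X]
    · refine le_trans (totalDegree_finset_prod _ _) ?_
      refine le_trans (Finset.sum_le_sum (g := fun _ => 1) fun j _ => ?_) ?_
      · show ((1 : MvPolynomial ℕ (ZMod 2)) - X j).totalDegree ≤ 1
        rw [CharTwo.sub_eq_add]
        refine le_trans (totalDegree_add _ _) ?_
        simp [totalDegree_one, totalDegree_X]
      · simp
  · set e : MvPolynomial ℕ (ZMod 2) →ₐ[ZMod 2] MvPolynomial ℕ (ZMod 2) :=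
      aeval (fun t => if t ∈ τ then 1 + X t else X t) with he_def
    have he : e ((∏ i ∈ σ, X i) * ∏ j ∈ τ, (1 - X j)) = ∏ t ∈ σ ∪ τ, X t := by
      rw [map_mul, map_prod, map_prod, Finset.prod_union hd]
      congr 1
      · refine Finset.prod_congr rfl fun i hi => ?_
        rw [he_def, aeval_X, if_neg (Finset.disjoint_left.mp hd hi)]
      · refine Finset.prod_congr rfl fun j hj => ?_
        rw [he_def, map_sub, map_one, aeval_X, if_pos hj, sub_add_cancel_left, CharTwo.neg_eq]
    have hle := td_aeval_le (fun t => if t ∈ τ then 1 + X t else X t)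
      (fun i => by
        split
        · refine le_trans (totalDegree_add _ _) ?_
          simp [totalDegree_one, totalDegree_X]
        · simp [totalDegree_X])
      ((∏ i ∈ σ, X i) * ∏ j ∈ τ, (1 - X j))
    rw [show (aeval fun t => if t ∈ τ then 1 + X t else X t :
        MvPolynomial ℕ (ZMod 2) →ₐ[ZMod 2] MvPolynomial ℕ (ZMod 2)) = e from rfl, he,
      td_prod_X, Finset.card_union_of_disjoint hd] at hle
    exact hle

/-- The key expansion: a partial product of indicators is a sum of `ρ`'s. -/
lemma rho_sum (n : ℕ) :
    ∀ S : Finset ℕ, S ⊆ Finset.Icc 1 n → ∀ v₀ : Finset ℕ, Disjoint v₀ S →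
    (∏ t ∈ Finset.Icc 1 n \ S,
        (if t ∈ v₀ then (X t : MvPolynomial ℕ (ZMod 2)) else 1 - X t))
      = ∑ w ∈ S.powerset, rho n (v₀ ∪ w) := by
  intro S
  induction S using Finset.induction_on with
  | empty => intro _ v₀ _; simp [rho]
  | @insert a S ha ih =>
      intro hS v₀ hdisj
      have haIcc : a ∈ Finset.Icc 1 n := hS (Finset.mem_insert_self a S)
      have hav₀ : a ∉ v₀ := fun h =>
        (Finset.disjoint_left.mp hdisj h) (Finset.mem_insert_self a S)
      have hSsub : S ⊆ Finset.Icc 1 n := (Finset.subset_insert a S).trans hS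
      have hd1 : Disjoint v₀ S := hdisj.mono_right (Finset.subset_insert a S)
      have hd2 : Disjoint (insert a v₀) S := by
        rw [Finset.insert_eq, Finset.disjoint_union_left]
        exact ⟨Finset.disjoint_singleton_left.mpr ha, hd1⟩
      have haT : a ∈ Finset.Icc 1 n \ S := Finset.mem_sdiff.mpr ⟨haIcc, ha⟩
      rw [Finset.sum_powerset_insert ha]
      have e1 : ∑ w ∈ S.powerset, rho n (v₀ ∪ insert a w)
          = ∑ w ∈ S.powerset, rho n (insert a v₀ ∪ w) :=
        Finset.sum_congr rfl fun w _ => by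
          rw [Finset.union_insert, ← Finset.insert_union]
      rw [e1, ← ih hSsub v₀ hd1, ← ih hSsub (insert a v₀) hd2]
      rw [← Finset.mul_prod_erase _ _ haT, ← Finset.mul_prod_erase _ _ haT]
      simp only [if_neg hav₀, if_pos (Finset.mem_insert_self a v₀)]
      have e2 : ∏ t ∈ (Finset.Icc 1 n \ S).erase a,
            (if t ∈ insert a v₀ then (X t : MvPolynomial ℕ (ZMod 2)) else 1 - X t)
          = ∏ t ∈ (Finset.Icc 1 n \ S).erase a,
            (if t ∈ v₀ then (X t : MvPolynomial ℕ (ZMod 2)) else 1 - X t) :=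
        Finset.prod_congr rfl fun t ht => by
          have hta : t ≠ a := Finset.ne_of_mem_erase ht
          simp [Finset.mem_insert, hta]
      rw [e2, Finset.sdiff_insert]
      ring

/-- Membership of `X i (1 - X j)` in the neural ideal of the chain code. -/
lemma Xi_one_sub_Xj_mem (m i j : ℕ) (hi : i ∈ Finset.Icc 1 (m - 1))
    (hj : j ∈ Finset.Icc 1 (m - 1)) (hji : j < i) :
    (X i * (1 - X j) : MvPolynomial ℕ (ZMod 2)) ∈ neuralIdeal (m - 1) (chainCode m) := by
  set n := m - 1 with hn
  have hij : i ≠ j := hji.ne'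
  have hiIcc : i ∈ Finset.Icc 1 n := hi
  have hjIcc : j ∈ Finset.Icc 1 n := hj
  have hsub : ({i, j} : Finset ℕ) ⊆ Finset.Icc 1 n := by
    intro t ht
    rcases Finset.mem_insert.mp ht with rfl | ht
    · exact hiIcc
    · rw [Finset.mem_singleton.mp ht]; exact hjIcc
  have hdisj : Disjoint ({i} : Finset ℕ) (Finset.Icc 1 n \ {i, j}) := by
    rw [Finset.disjoint_singleton_left, Finset.mem_sdiff]
    intro h
    exact h.2 (Finset.mem_insert_self i {j})
  have key := rho_sum n (Finset.Icc 1 n \ {i, j}) Finset.sdiff_subset {i} hdisj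
  have hset : Finset.Icc 1 n \ (Finset.Icc 1 n \ {i, j}) = ({i, j} : Finset ℕ) := by
    rw [Finset.sdiff_sdiff_self_left, Finset.inter_eq_right.mpr hsub]
  rw [hset, Finset.prod_pair hij, if_pos (Finset.mem_singleton_self i),
    if_neg (by simpa [Finset.mem_singleton] using hij.symm)] at key
  rw [key]
  refine Ideal.sum_mem _ fun w hw => ?_
  refine Ideal.subset_span ⟨{i} ∪ w, ?_, ?_, rfl⟩
  · intro t ht
    rcases Finset.mem_union.mp ht with ht | ht
    · rw [Finset.mem_singleton.mp ht]; exact hiIcc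
    · exact Finset.sdiff_subset (Finset.mem_powerset.mp hw ht)
  · rintro ⟨l, hl, hEq⟩
    have hiIn : i ∈ Finset.Icc 1 l := by
      rw [← hEq]; exact Finset.mem_union_left _ (Finset.mem_singleton_self i)
    have hjIn : j ∈ Finset.Icc 1 l := by
      rw [Finset.mem_Icc] at hiIn ⊢
      rw [Finset.mem_Icc] at hjIcc
      omega
    rw [← hEq] at hjIn
    rcases Finset.mem_union.mp hjIn with h | h
    · exact hij (Finset.mem_singleton.mp h).symm
    · have := Finset.mem_powerset.mp hw h
      rw [Finset.mem_sdiff] at this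
      exact this.2 (Finset.mem_insert_of_mem (Finset.mem_singleton_self j))

/-- The characteristic point of a finset. -/
def chi (S : Finset ℕ) : ℕ → ZMod 2 := fun t => if t ∈ S then 1 else 0

lemma eval_ideal_zero (n : ℕ) (C : Set (Finset ℕ)) (S : Finset ℕ)
    (hS : S ∩ Finset.Icc 1 n ∈ C) {f : MvPolynomial ℕ (ZMod 2)}
    (hf : f ∈ neuralIdeal n C) : eval (chi S) f = 0 := by
  have hker : neuralIdeal n C ≤ RingHom.ker (eval (chi S)) := by
    rw [neuralIdeal, Ideal.span_le]
    rintro p ⟨v, hv, hvC, rfl⟩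
    rw [SetLike.mem_coe, RingHom.mem_ker, rho, map_prod]
    have hne : v ≠ S ∩ Finset.Icc 1 n := fun h => hvC (h ▸ hS)
    obtain ⟨t, ht⟩ : ∃ t, ¬(t ∈ v ↔ t ∈ S ∩ Finset.Icc 1 n) := by
      by_contra hall
      push_neg at hall
      exact hne (Finset.ext fun t => hall t)
    rw [iff_iff_implies_and_implies, not_and_or] at ht
    rcases ht with ht | ht
    · push_neg at ht
      obtain ⟨htv, htS⟩ := ht
      have htIcc : t ∈ Finset.Icc 1 n := hv htv
      have htS' : t ∉ S := fun h => htS (Finset.mem_inter.mpr ⟨h, htIcc⟩)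
      refine Finset.prod_eq_zero htIcc ?_
      rw [if_pos htv, eval_X, chi, if_neg htS']
    · push_neg at ht
      obtain ⟨htS, htv⟩ := ht
      have htIcc : t ∈ Finset.Icc 1 n := (Finset.mem_inter.mp htS).2
      have htS' : t ∈ S := (Finset.mem_inter.mp htS).1
      refine Finset.prod_eq_zero htIcc ?_
      rw [if_neg htv, map_sub, map_one, eval_X, chi, if_pos htS', sub_self]
  exact RingHom.mem_ker.mp (hker hf)

lemma eval_pm_one (S σ τ : Finset ℕ) (hσ : σ ⊆ S) (hτ : ∀ t ∈ τ, t ∉ S) :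
    eval (chi S) ((∏ i ∈ σ, X i) * ∏ j ∈ τ, (1 - X j) : MvPolynomial ℕ (ZMod 2)) = 1 := by
  rw [map_mul, map_prod, map_prod]
  rw [Finset.prod_eq_one fun i hi => by rw [eval_X, chi, if_pos (hσ hi)],
    Finset.prod_eq_one fun j hj => by
      rw [map_sub, map_one, eval_X, chi, if_neg (hτ j hj), sub_zero],
    one_mul]

/-- Any pseudo-monomial in the neural ideal of the chain code has a "descent pair". -/
lemma pm_mem_exists (m : ℕ) (hm : 3 ≤ m) (σ τ : Finset ℕ) (hd : Disjoint σ τ)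
    (hmem : ((∏ i ∈ σ, X i) * ∏ j ∈ τ, (1 - X j) : MvPolynomial ℕ (ZMod 2))
      ∈ neuralIdeal (m - 1) (chainCode m)) :
    ∃ i ∈ σ ∩ Finset.Icc 1 (m - 1), ∃ j ∈ τ ∩ Finset.Icc 1 (m - 1), j < i := by
  by_contra hno
  push_neg at hno
  set n := m - 1 with hn
  obtain ⟨k, hkn, hσk, hτk⟩ : ∃ k, k ≤ n ∧ (σ ∩ Finset.Icc 1 n ⊆ Finset.Icc 1 k) ∧
      (∀ t ∈ τ, t ∉ Finset.Icc 1 k) := by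
    by_cases hne : (τ ∩ Finset.Icc 1 n).Nonempty
    · set j₀ := (τ ∩ Finset.Icc 1 n).min' hne with hj₀def
      have hj₀mem : j₀ ∈ τ ∩ Finset.Icc 1 n := Finset.min'_mem _ hne
      have hj₀Icc := (Finset.mem_inter.mp hj₀mem).2
      rw [Finset.mem_Icc] at hj₀Icc
      refine ⟨j₀ - 1, by omega, ?_, ?_⟩
      · intro t ht
        have htσ := (Finset.mem_inter.mp ht).1
        have htIcc := (Finset.mem_inter.mp ht).2
        rw [Finset.mem_Icc] at htIcc
        have hle : t ≤ j₀ := hno t ht j₀ hj₀mem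
        have htne : t ≠ j₀ :=
          fun h => (Finset.disjoint_left.mp hd htσ) (h ▸ (Finset.mem_inter.mp hj₀mem).1)
        rw [Finset.mem_Icc]
        omega
      · intro t htτ htIcc
        rw [Finset.mem_Icc] at htIcc
        have : t ∈ τ ∩ Finset.Icc 1 n :=
          Finset.mem_inter.mpr ⟨htτ, Finset.mem_Icc.mpr ⟨htIcc.1, by omega⟩⟩
        have := Finset.min'_le _ t this
        omega
    · refine ⟨n, le_rfl, Finset.inter_subset_right, fun t htτ htIcc => ?_⟩
      exact hne ⟨t, Finset.mem_inter.mpr ⟨htτ, htIcc⟩⟩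
  set S := Finset.Icc 1 k ∪ σ with hSdef
  have hScap : S ∩ Finset.Icc 1 n = Finset.Icc 1 k := by
    apply Finset.Subset.antisymm
    · intro t ht
      rcases Finset.mem_inter.mp ht with ⟨h1, h2⟩
      rcases Finset.mem_union.mp h1 with h | h
      · exact h
      · exact hσk (Finset.mem_inter.mpr ⟨h, h2⟩)
    · intro t ht
      exact Finset.mem_inter.mpr
        ⟨Finset.mem_union_left _ ht, Finset.Icc_subset_Icc le_rfl hkn ht⟩
  have hcode : S ∩ Finset.Icc 1 n ∈ chainCode m := by
    rw [hScap]; exact ⟨k, by omega, rfl⟩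
  have h0 := eval_ideal_zero n (chainCode m) S hcode hmem
  have h1 : eval (chi S) ((∏ i ∈ σ, X i) * ∏ j ∈ τ, (1 - X j) :
      MvPolynomial ℕ (ZMod 2)) = 1 := by
    refine eval_pm_one S σ τ Finset.subset_union_right fun t ht htS => ?_
    rcases Finset.mem_union.mp htS with h | h
    · exact hτk t ht h
    · exact (Finset.disjoint_right.mp hd ht) h
  rw [h0] at h1
  exact zero_ne_one h1

lemma td_Xi_one_sub_Xj (i j : ℕ) (hij : i ≠ j) :
    (X i * (1 - X j) : MvPolynomial ℕ (ZMod 2)).totalDegree = 2 := by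
  have := td_pm {i} {j} (Finset.disjoint_singleton.mpr hij)
  simpa using this

end CFChainAux

open CFChainAux

theorem cf_chainCode (m : ℕ) (hm : 3 ≤ m) :
    CF (m - 1) (chainCode m) =
      {f | ∃ i ∈ Finset.Icc 1 (m - 1), ∃ j ∈ Finset.Icc 1 (m - 1),
        j < i ∧ f = X i * (1 - X j)} := by
  ext f
  simp only [CF, Set.mem_setOf_eq]
  constructor
  · rintro ⟨⟨σ, τ, hd, rfl⟩, hfJ, hmin⟩
    obtain ⟨i, hiσn, j, hjτn, hji⟩ := pm_mem_exists m hm σ τ hd hfJ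
    obtain ⟨hiσ, hin⟩ := Finset.mem_inter.mp hiσn
    obtain ⟨hjτ, hjn⟩ := Finset.mem_inter.mp hjτn
    have hij : i ≠ j := hji.ne'
    have hcard : σ.card + τ.card ≤ 2 := by
      by_contra hbig
      push_neg at hbig
      apply hmin
      refine ⟨X i * (1 - X j),
        ⟨{i}, {j}, Finset.disjoint_singleton.mpr hij, by simp⟩,
        Xi_one_sub_Xj_mem m i j hin hjn hji, ?_, ?_⟩
      · rw [td_pm σ τ hd, td_Xi_one_sub_Xj i j hij]
        omega
      · refine ⟨(∏ t ∈ σ.erase i, X t) * ∏ t ∈ τ.erase j, (1 - X t), ?_⟩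
        rw [← Finset.mul_prod_erase σ _ hiσ, ← Finset.mul_prod_erase τ _ hjτ]
        ring
    have h1 : σ.card = 1 ∧ τ.card = 1 := by
      have hσpos : 1 ≤ σ.card := Finset.card_pos.mpr ⟨i, hiσ⟩
      have hτpos : 1 ≤ τ.card := Finset.card_pos.mpr ⟨j, hjτ⟩
      omega
    obtain ⟨a, ha⟩ := Finset.card_eq_one.mp h1.1
    obtain ⟨b, hb⟩ := Finset.card_eq_one.mp h1.2
    have hai : a = i := by
      rw [ha] at hiσ; exact (Finset.mem_singleton.mp hiσ).symm
    have hbj : b = j := by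
      rw [hb] at hjτ; exact (Finset.mem_singleton.mp hjτ).symm
    refine ⟨i, hin, j, hjn, hji, ?_⟩
    rw [ha, hb, hai, hbj, Finset.prod_singleton, Finset.prod_singleton]
  · rintro ⟨i, hin, j, hjn, hji, rfl⟩
    have hij : i ≠ j := hji.ne'
    refine ⟨⟨{i}, {j}, Finset.disjoint_singleton.mpr hij, by simp⟩,
      Xi_one_sub_Xj_mem m i j hin hjn hji, ?_⟩
    rintro ⟨g, ⟨σ', τ', hd', rfl⟩, hgJ, hdeg, -⟩
    obtain ⟨i', hi'n, j', hj'n, -⟩ := pm_mem_exists m hm σ' τ' hd' hgJ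
    have hσ'pos : 1 ≤ σ'.card := Finset.card_pos.mpr ⟨i', (Finset.mem_inter.mp hi'n).1⟩
    have hτ'pos : 1 ≤ τ'.card := Finset.card_pos.mpr ⟨j', (Finset.mem_inter.mp hj'n).1⟩
    rw [td_pm σ' τ' hd', td_Xi_one_sub_Xj i j hij] at hdeg
    omega
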